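/- For all real x ≥ 0, natural number j, and complex s with Re(s) > 0 and x·|s| ≥ 2, the integral ∫_x^∞ u^j e^{-us} du satisfies the bound |∫_x^∞ u^j e^{-us} du| ≤ C · j! · e^{-Re(s)·x} · x^j / |s| for some absolute constant C. -/

import Mathlib

open Real Complex MeasureTheory Set Filter Asymptotics

lemma aux_norm (u : ℝ) (j : ℕ) (s : ℂ) (hu : 0 ≤ u) :
    ‖(u : ℂ) ^ j * Complex.exp (-u * s)‖ = u ^ j * Real.exp (-(u * s.re)) := by
  rw [norm_mul, norm_pow, Complex.norm_exp]
  simp [Complex.norm_of_nonneg hu, Complex.neg_re, Complex.mul_re, _root_.abs_of_nonneg hu]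

lemma aux_cont (j : ℕ) (s : ℂ) : Continuous (fun u : ℝ => (u : ℂ) ^ j * Complex.exp (-u * s)) := by
  fun_prop

lemma aux_integrable (x : ℝ) (hx : 0 ≤ x) (j : ℕ) (s : ℂ) (hs : 0 < s.re) :
    IntegrableOn (fun u : ℝ => (u : ℂ) ^ j * Complex.exp (-u * s)) (Ioi x) := by
  have hreal : IntegrableOn (fun u : ℝ => u ^ j * Real.exp (-(u * s.re))) (Ioi x) := by
    apply integrable_of_isBigO_exp_neg (b := s.re / 2) (by positivity)
      (by fun_prop)
    have ht : Tendsto (fun u : ℝ => (u ^ j * Real.exp (-(u * s.re))) / Real.exp (-(s.re/2) * u))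
        atTop (nhds 0) := by
      have := tendsto_rpow_mul_exp_neg_mul_atTop_nhds_zero (j : ℝ) (s.re / 2) (by positivity)
      apply this.congr'
      filter_upwards [eventually_gt_atTop 0] with u hu
      rw [Real.rpow_natCast, eq_div_iff (Real.exp_ne_zero _), mul_assoc, ← Real.exp_add]
      congr 1
      ring
    exact (Asymptotics.isLittleO_of_tendsto (fun u h => absurd h (Real.exp_ne_zero _)) ht).isBigO
  rw [IntegrableOn, ← integrable_norm_iff ((aux_cont j s).aestronglyMeasurable.restrict)]
  apply hreal.congr_fun _ measurableSet_Ioi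
  intro u hu
  exact (aux_norm u j s (hx.trans (le_of_lt hu))).symm

lemma aux_deriv (j : ℕ) (s : ℂ) (hs : s ≠ 0) (z : ℂ) :
    HasDerivAt (fun z : ℂ => -(z ^ j * Complex.exp (-z * s)) / s)
      (z ^ j * Complex.exp (-z * s) - (j : ℂ) / s * (z ^ (j - 1) * Complex.exp (-z * s))) z := by
  have h1 : HasDerivAt (fun z : ℂ => z ^ j) ((j : ℂ) * z ^ (j - 1)) z := hasDerivAt_pow j z
  have h2 : HasDerivAt (fun z : ℂ => Complex.exp (-z * s)) (-s * Complex.exp (-z * s)) z := by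
    have hd : HasDerivAt (fun z : ℂ => -z * s) (-s) z := by
      simpa using ((hasDerivAt_id z).neg.mul_const s)
    simpa [mul_comm, Function.comp_def] using (Complex.hasDerivAt_exp (-z * s)).comp z hd
  have := ((h1.mul h2).neg).div_const s
  refine this.congr_deriv ?_
  linear_combination (z ^ j * Complex.exp (-z * s)) * mul_inv_cancel₀ hs

lemma aux_tendsto (j : ℕ) (s : ℂ) (hs : 0 < s.re) :
    Tendsto (fun u : ℝ => -((u : ℂ) ^ j * Complex.exp (-u * s)) / s) atTop (nhds 0) := by
  rw [tendsto_zero_iff_norm_tendsto_zero]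
  have ht : Tendsto (fun u : ℝ => (u ^ j * Real.exp (-(u * s.re))) / ‖s‖)
      atTop (nhds 0) := by
    have := tendsto_rpow_mul_exp_neg_mul_atTop_nhds_zero (j : ℝ) s.re hs
    have h2 := this.div_const ‖s‖
    rw [zero_div] at h2
    apply h2.congr'
    filter_upwards [eventually_gt_atTop 0] with u hu
    rw [Real.rpow_natCast]
    ring_nf
  apply ht.congr'
  filter_upwards [eventually_ge_atTop 0] with u hu
  rw [norm_div, norm_neg, aux_norm u j s hu]

lemma aux_recursion (x : ℝ) (hx : 0 ≤ x) (j : ℕ) (s : ℂ) (hs : 0 < s.re) :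
    ∫ u in Ioi x, (u : ℂ) ^ j * Complex.exp (-u * s) =
      (x : ℂ) ^ j * Complex.exp (-x * s) / s +
        (j : ℂ) / s * ∫ u in Ioi x, (u : ℂ) ^ (j - 1) * Complex.exp (-u * s) := by
  have hs0 : s ≠ 0 := fun h => by simp [h] at hs
  have key : ∫ u in Ioi x, ((u : ℂ) ^ j * Complex.exp (-u * s)
      - (j : ℂ) / s * ((u : ℂ) ^ (j - 1) * Complex.exp (-u * s))) =
      0 - (-((x : ℂ) ^ j * Complex.exp (-x * s)) / s) := by
    apply integral_Ioi_of_hasDerivAt_of_tendsto'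
      (fun u _ => (aux_deriv j s hs0 u).comp_ofReal)
    · exact ((aux_integrable x hx j s hs).sub
        ((aux_integrable x hx (j - 1) s hs).const_mul _))
    · exact aux_tendsto j s hs
  rw [integral_sub (aux_integrable x hx j s hs)
      ((aux_integrable x hx (j - 1) s hs).const_mul _),
    MeasureTheory.integral_const_mul] at key
  rw [sub_eq_iff_eq_add] at key
  rw [key]
  ring

lemma aux_bound (x : ℝ) (j : ℕ) (s : ℂ) (hx : 0 ≤ x) (hs : 0 < s.re)
    (hxs : 2 ≤ x * ‖s‖) :
    ‖∫ u in Ioi x, (u : ℂ) ^ j * Complex.exp (-u * s)‖ ≤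
      2 * (Nat.factorial j) * Real.exp (-s.re * x) * x ^ j / ‖s‖ := by
  have hs0 : s ≠ 0 := fun h => by simp [h] at hs
  have habs : 0 < ‖s‖ := norm_pos_iff.mpr hs0
  have hx0 : 0 < x := by nlinarith
  have hE : (0:ℝ) < Real.exp (-s.re * x) := Real.exp_pos _
  induction j with
  | zero =>
    rw [aux_recursion x hx 0 s hs]
    simp only [Nat.cast_zero, zero_div, zero_mul, add_zero, pow_zero, one_mul,
      Nat.factorial_zero, Nat.cast_one, mul_one]
    rw [norm_div, Complex.norm_exp]
    have hre : (-(x:ℂ) * s).re = -s.re * x := by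
      simp [Complex.neg_re, Complex.mul_re]; ring
    rw [hre, div_le_div_iff₀ habs habs]
    nlinarith [mul_pos hE habs]
  | succ n ih =>
    rw [aux_recursion x hx (n + 1) s hs]
    have hnorm : ‖(x : ℂ) ^ (n+1) * Complex.exp (-x * s) / s‖ =
        x ^ (n+1) * Real.exp (-s.re * x) / ‖s‖ := by
      rw [norm_div, aux_norm x (n+1) s hx]
      congr 2
      ring_nf
    have hfn : ((Nat.factorial (n+1) : ℝ)) = (n+1) * Nat.factorial n := by
      rw [Nat.factorial_succ]; push_cast; ring
    have hfact1 : (1:ℝ) ≤ Nat.factorial (n+1) := by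
      exact_mod_cast Nat.one_le_iff_ne_zero.mpr (Nat.factorial_ne_zero (n+1))
    have hfn0 : (0:ℝ) < Nat.factorial n := by
      exact_mod_cast Nat.factorial_pos n
    set E := Real.exp (-s.re * x) with hEdef
    set a := ‖s‖ with hadef
    have h2x : 2 * x ^ n / a ≤ x ^ (n+1) := by
      rw [div_le_iff₀ habs]
      calc 2 * x ^ n = x ^ n * 2 := by ring
        _ ≤ x ^ n * (x * a) := mul_le_mul_of_nonneg_left hxs (by positivity)
        _ = x ^ (n+1) * a := by ring
    calc ‖(x : ℂ) ^ (n+1) * Complex.exp (-x * s) / s +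
          ((n+1 : ℕ) : ℂ) / s * ∫ u in Ioi x, (u : ℂ) ^ (n + 1 - 1) * Complex.exp (-u * s)‖
        ≤ x ^ (n+1) * E / a +
          ((n+1 : ℝ) / a) * (2 * (Nat.factorial n) * E * x ^ n / a) := by
          apply (norm_add_le _ _).trans
          rw [hnorm]
          gcongr
          rw [norm_mul, norm_div, RCLike.norm_natCast]
          push_cast
          gcongr
      _ ≤ (Nat.factorial (n+1)) * E * x ^ (n+1) / a +
          (Nat.factorial (n+1)) * E * x ^ (n+1) / a := by
          apply add_le_add
          · apply (div_le_div_iff_of_pos_right habs).mpr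
            nlinarith [mul_nonneg (sub_nonneg.mpr hfact1) (le_of_lt (mul_pos hE (pow_pos hx0 (n+1))))]
          · have e1 : (n+1 : ℝ) / a * (2 * (Nat.factorial n) * E * x ^ n / a) =
                ((n+1) * (Nat.factorial n) * E) * (2 * x ^ n / a) / a := by
              ring
            rw [e1]
            apply (div_le_div_iff_of_pos_right habs).mpr
            calc ((n+1 : ℝ) * (Nat.factorial n) * E) * (2 * x ^ n / a)
                ≤ ((n+1 : ℝ) * (Nat.factorial n) * E) * x ^ (n+1) :=
                  mul_le_mul_of_nonneg_left h2x (by positivity)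
              _ = (Nat.factorial (n+1)) * E * x ^ (n+1) := by rw [hfn]
      _ = 2 * (Nat.factorial (n+1)) * E * x ^ (n+1) / a := by ring

theorem stmt0 :
    ∃ C : ℝ, 0 < C ∧ ∀ (x : ℝ) (j : ℕ) (s : ℂ), 0 ≤ x → 0 < s.re →
      2 ≤ x * ‖s‖ →
      ‖∫ u in Set.Ioi x, (u : ℂ) ^ j * Complex.exp (-u * s)‖ ≤
        C * (Nat.factorial j) * Real.exp (-s.re * x) * x ^ j / ‖s‖ := by
  exact ⟨2, by norm_num, fun x j s hx hs hxs => aux_bound x j s hx hs hxs⟩
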